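/- The Ribe function F₀(x) = ∑ᵢ xᵢ ln|xᵢ| − (∑ᵢ xᵢ) ln|∑ᵢ xᵢ| (with the convention 0·ln 0 = 0), defined on the space ℓ₁⁰ of finitely supported real sequences with the ℓ₁ norm, is quasi-linear: F₀(rx) = rF₀(x) for all r ∈ ℝ, and there is a constant C such that |F₀(x+y) − F₀(x) − F₀(y)| ≤ C(‖x‖₁ + ‖y‖₁) for all x, y ∈ ℓ₁⁰. -/

import Mathlib

/-- The Ribe function on finitely supported real sequences,
with the convention `0 * log 0 = 0` (note `Real.log 0 = 0`). -/
noncomputable def ribe (x : ℕ →₀ ℝ) : ℝ :=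
  (∑ i ∈ x.support, x i * Real.log |x i|) -
    (∑ i ∈ x.support, x i) * Real.log |∑ i ∈ x.support, x i|

namespace RibeAux

noncomputable def f (t : ℝ) : ℝ := t * Real.log |t|

lemma f_zero : f 0 = 0 := by simp [f]

lemma f_smul (r : ℝ) (hr : r ≠ 0) (t : ℝ) :
    f (r * t) = r * f t + r * t * Real.log |r| := by
  rcases eq_or_ne t 0 with h | h
  · simp [f, h]
  · simp only [f, abs_mul, Real.log_mul (abs_ne_zero.2 hr) (abs_ne_zero.2 h)]
    ring

lemma g_bound (t s : ℝ) (hs : 0 < s) (ht : |t| ≤ s) :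
    |t * Real.log (|t| / s)| ≤ s := by
  rcases eq_or_ne t 0 with h | h
  · simp [h]; linarith
  · have h0 : 0 < |t| := abs_pos.2 h
    have hu0 : 0 < |t| / s := div_pos h0 hs
    have hu : |t| / s ≤ 1 := (div_le_one hs).2 ht
    have hlog : Real.log (|t| / s) ≤ 0 := Real.log_nonpos hu0.le hu
    have h2 : -Real.log (|t| / s) = Real.log (s / |t|) := by
      rw [← Real.log_inv]
      congr 1
      field_simp
    have h3 : Real.log (s / |t|) ≤ s / |t| - 1 :=
      Real.log_le_sub_one_of_pos (div_pos hs h0)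
    have h4 : |Real.log (|t| / s)| ≤ s / |t| := by
      rw [abs_of_nonpos hlog, h2]; linarith
    calc |t * Real.log (|t| / s)| = |t| * |Real.log (|t| / s)| := abs_mul _ _
      _ ≤ |t| * (s / |t|) := mul_le_mul_of_nonneg_left h4 (abs_nonneg t)
      _ = s := by field_simp

lemma key (a b : ℝ) : |f (a + b) - f a - f b| ≤ 3 * (|a| + |b|) := by
  rcases eq_or_lt_of_le (by positivity : (0:ℝ) ≤ |a| + |b|) with h0 | h0
  · have ha : a = 0 := by
      have := abs_nonneg a; have := abs_nonneg b
      have : |a| = 0 := by linarith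
      exact abs_eq_zero.mp this
    have hb : b = 0 := by
      have := abs_nonneg a; have := abs_nonneg b
      have : |b| = 0 := by linarith
      exact abs_eq_zero.mp this
    simp [ha, hb, f]
  · set s := |a| + |b| with hsdef
    have hs : 0 < s := h0
    have fg : ∀ t : ℝ, f t = t * Real.log (|t| / s) + t * Real.log s := by
      intro t
      rcases eq_or_ne t 0 with ht | ht
      · simp [f, ht]
      · rw [f, Real.log_div (abs_ne_zero.2 ht) (ne_of_gt hs)]; ring
    have e : f (a + b) - f a - f b =
        (a + b) * Real.log (|a + b| / s) - a * Real.log (|a| / s)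
          - b * Real.log (|b| / s) := by
      rw [fg (a + b), fg a, fg b]; ring
    rw [e]
    have h1 := g_bound (a + b) s hs (abs_add_le a b)
    have h2 := g_bound a s hs (le_add_of_nonneg_right (abs_nonneg b))
    have h3 := g_bound b s hs (le_add_of_nonneg_left (abs_nonneg a))
    have habs : |(a + b) * Real.log (|a + b| / s) - a * Real.log (|a| / s)
          - b * Real.log (|b| / s)| ≤
        |(a + b) * Real.log (|a + b| / s)| + |a * Real.log (|a| / s)|
          + |b * Real.log (|b| / s)| := by
      calc _ ≤ |(a + b) * Real.log (|a + b| / s) - a * Real.log (|a| / s)|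
            + |b * Real.log (|b| / s)| := abs_sub _ _
        _ ≤ _ := by
            have := abs_sub ((a + b) * Real.log (|a + b| / s))
              (a * Real.log (|a| / s))
            linarith
    linarith

lemma sum_off_support (x : ℕ →₀ ℝ) {s : Finset ℕ} (h : x.support ⊆ s)
    (g : ℝ → ℝ) (hg : g 0 = 0) :
    ∑ i ∈ x.support, g (x i) = ∑ i ∈ s, g (x i) := by
  apply Finset.sum_subset h
  intro i _ hi
  rw [Finsupp.notMem_support_iff.mp hi, hg]

lemma ribe_eq (x : ℕ →₀ ℝ) :
    ribe x = (∑ i ∈ x.support, f (x i)) - f (∑ i ∈ x.support, x i) := rfl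

lemma ribe_eq' (x : ℕ →₀ ℝ) {s : Finset ℕ} (h : x.support ⊆ s) :
    ribe x = (∑ i ∈ s, f (x i)) - f (∑ i ∈ s, x i) := by
  rw [ribe_eq, sum_off_support x h f f_zero,
    sum_off_support x h (fun t => t) rfl]

lemma abs_sum_le (x : ℕ →₀ ℝ) {s : Finset ℕ} (h : x.support ⊆ s) :
    |∑ i ∈ s, x i| ≤ ∑ i ∈ x.support, |x i| := by
  rw [sum_off_support x h (fun t => |t|) abs_zero]
  exact Finset.abs_sum_le_sum_abs _ _

end RibeAux

open RibeAux in
theorem ribe_quasilinear :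
    (∀ (r : ℝ) (x : ℕ →₀ ℝ), ribe (r • x) = r * ribe x) ∧
    ∃ C : ℝ, ∀ x y : ℕ →₀ ℝ,
      |ribe (x + y) - ribe x - ribe y| ≤
        C * ((∑ i ∈ x.support, |x i|) + (∑ i ∈ y.support, |y i|)) := by
  constructor
  · intro r x
    rcases eq_or_ne r 0 with hr | hr
    · simp [ribe, hr]
    · have hsupp : (r • x).support = x.support := Finsupp.support_smul_eq hr
      rw [ribe_eq, ribe_eq, hsupp]
      simp only [Finsupp.smul_apply, smul_eq_mul]
      rw [Finset.sum_congr rfl (fun i _ => f_smul r hr (x i)),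
        ← Finset.mul_sum, f_smul r hr]
      rw [Finset.sum_add_distrib]
      simp only [← Finset.mul_sum, ← Finset.sum_mul]
      ring
  · refine ⟨6, fun x y => ?_⟩
    classical
    set u := x.support ∪ y.support with hu
    have hx : x.support ⊆ u := Finset.subset_union_left
    have hy : y.support ⊆ u := Finset.subset_union_right
    have hxy : (x + y).support ⊆ u := Finsupp.support_add
    rw [ribe_eq' x hx, ribe_eq' y hy, ribe_eq' (x + y) hxy]
    simp only [Finsupp.add_apply]
    rw [Finset.sum_add_distrib]
    set A := ∑ i ∈ u, x i
    set B := ∑ i ∈ u, y i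
    have e : (∑ i ∈ u, f (x i + y i)) - f (A + B)
          - ((∑ i ∈ u, f (x i)) - f A) - ((∑ i ∈ u, f (y i)) - f B)
        = (∑ i ∈ u, (f (x i + y i) - f (x i) - f (y i)))
          - (f (A + B) - f A - f B) := by
      rw [Finset.sum_sub_distrib, Finset.sum_sub_distrib]
      ring
    rw [e]
    have h1 : |∑ i ∈ u, (f (x i + y i) - f (x i) - f (y i))|
        ≤ ∑ i ∈ u, (3 * (|x i| + |y i|)) := by
      refine (Finset.abs_sum_le_sum_abs _ _).trans ?_
      exact Finset.sum_le_sum fun i _ => key (x i) (y i)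
    have h2 : |f (A + B) - f A - f B| ≤ 3 * (|A| + |B|) := key A B
    have hA : |A| ≤ ∑ i ∈ x.support, |x i| := abs_sum_le x hx
    have hB : |B| ≤ ∑ i ∈ y.support, |y i| := abs_sum_le y hy
    have hxs : ∑ i ∈ u, |x i| = ∑ i ∈ x.support, |x i| :=
      (sum_off_support x hx (fun t => |t|) abs_zero).symm
    have hys : ∑ i ∈ u, |y i| = ∑ i ∈ y.support, |y i| :=
      (sum_off_support y hy (fun t => |t|) abs_zero).symm
    have h3 : ∑ i ∈ u, (3 * (|x i| + |y i|))
        = 3 * ((∑ i ∈ x.support, |x i|) + (∑ i ∈ y.support, |y i|)) := by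
      rw [← hxs, ← hys, ← Finset.sum_add_distrib, ← Finset.mul_sum]
    have htri : |(∑ i ∈ u, (f (x i + y i) - f (x i) - f (y i)))
          - (f (A + B) - f A - f B)|
        ≤ |∑ i ∈ u, (f (x i + y i) - f (x i) - f (y i))|
          + |f (A + B) - f A - f B| := abs_sub _ _
    linarith
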